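/- (Knapp-type sharpness on the paraboloid) Let 0 < α < d−1 and let ν be a Borel probability measure supported on P^{d−1} := {(x', |x'|²) : x' ∈ [0,1]^{d−1}} whose support has Hausdorff dimension α, satisfying ν(B(x,r)) ≤ C r^α for all x and r > 0. If the restriction estimate ‖(f dν)^∧‖_{L^p(ℝ^d)} ≤ C_{p,q} ‖f‖_{L^q(ν)} holds for all f ∈ L^q(ν), then p ≥ q'(d+1)/α, where 1/q + 1/q' = 1. -/

import Mathlib

open MeasureTheory Filter Metric
open scoped ENNReal

/-- The topological support of a measure. -/
def measSupport {X : Type*} [TopologicalSpace X] [MeasurableSpace X] (μ : Measure X) : Set X :=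
  {x | ∀ U ∈ nhds x, 0 < μ U}

/-- The (compact piece of the) paraboloid `{(x', |x'|²) : x' ∈ [0,1]^n}` inside `ℝ^{n+1}`. -/
def paraboloid (n : ℕ) : Set (EuclideanSpace ℝ (Fin (n + 1))) :=
  {y | (∀ i : Fin n, y (Fin.castSucc i) ∈ Set.Icc (0 : ℝ) 1) ∧
    y (Fin.last n) = ∑ i : Fin n, (y (Fin.castSucc i)) ^ 2}


lemma measSupport_compl_null {X : Type*} [TopologicalSpace X] [MeasurableSpace X]
    [SecondCountableTopology X] [OpensMeasurableSpace X] (μ : Measure X) :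
    μ (measSupport μ)ᶜ = 0 := by
  set S : Set (Set X) := {U | IsOpen U ∧ μ U = 0} with hS
  obtain ⟨T, hTc, hTS, hTU⟩ := TopologicalSpace.isOpen_sUnion_countable S (fun s hs => hs.1)
  have hO : μ (⋃₀ S) = 0 := by
    rw [← hTU]
    exact (measure_sUnion_null_iff hTc).2 fun s hs => (hTS hs).2
  refine measure_mono_null ?_ hO
  intro x hx
  simp only [measSupport, Set.mem_compl_iff, Set.mem_setOf_eq, not_forall] at hx
  obtain ⟨U, hU, hUx⟩ := hx
  obtain ⟨V, hVU, hV, hxV⟩ := mem_nhds_iff.1 hU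
  exact ⟨V, ⟨hV, le_antisymm (by simpa using (measure_mono hVU).trans (le_of_not_gt hUx)) zero_le⟩, hxV⟩

lemma isClosed_measSupport {X : Type*} [TopologicalSpace X] [MeasurableSpace X] (μ : Measure X) :
    IsClosed (measSupport μ) := by
  rw [← isOpen_compl_iff, isOpen_iff_mem_nhds]
  intro x hx
  simp only [measSupport, Set.mem_compl_iff, Set.mem_setOf_eq, not_forall] at hx
  obtain ⟨U, hU, hUx⟩ := hx
  obtain ⟨V, hVU, hV, hxV⟩ := mem_nhds_iff.1 hU
  refine Filter.mem_of_superset (hV.mem_nhds hxV) fun y hy => ?_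
  simp only [measSupport, Set.mem_compl_iff, Set.mem_setOf_eq, not_forall]
  exact ⟨V, hV.mem_nhds hy, by intro h; exact hUx (h.trans_le (measure_mono hVU))⟩

lemma frostman_claim {X : Type*} [MetricSpace X] [MeasurableSpace X] [BorelSpace X]
    [SecondCountableTopology X] (ν : Measure X) [IsProbabilityMeasure ν] (d : ℝ) (hd : 0 < d)
    (hdim : dimH (measSupport ν) < ENNReal.ofReal d) (r₀ : ℝ) (hr₀ : 0 < r₀) :
    ∃ x r, 0 < r ∧ r < r₀ ∧ ENNReal.ofReal (r ^ d) ≤ ν (Metric.closedBall x r) := by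
  by_contra hcon
  push_neg at hcon
  have hle : ν ≤ μH[d] := by
    refine Measure.le_hausdorffMeasure d ν (ENNReal.ofReal (r₀/2)) (by positivity) ?_
    intro s hs
    rcases s.eq_empty_or_nonempty with rfl | ⟨x, hx⟩
    · simp
    have hsfin : EMetric.diam s ≠ ∞ := ne_top_of_le_ne_top (by simp) hs
    set R : ℝ := Metric.diam s with hR
    have hR0 : 0 ≤ R := Metric.diam_nonneg
    have hRr : R ≤ r₀ / 2 := by
      rw [hR, Metric.diam]
      exact ENNReal.toReal_le_of_le_ofReal (by positivity) hs
    have key : ∀ k : ℕ, ν s ≤ ENNReal.ofReal ((R + (r₀/4)/(k+1)) ^ d) := by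
      intro k
      have hk1 : (0:ℝ) < (r₀/4)/(k+1) := by positivity
      have hk2 : (r₀/4)/(k+1) ≤ r₀/4 := by
        rw [div_le_iff₀ (by positivity)]
        nlinarith
      set t : ℝ := R + (r₀/4)/(k+1) with ht
      have htR : R < t := by simp [ht]; positivity
      have htr : t < r₀ := by rw [ht]; linarith
      have hsub : s ⊆ closedBall x t := fun y hy =>
        (Metric.dist_le_diam_of_mem (Metric.isBounded_iff_ediam_ne_top.2 hsfin) hy hx).trans htR.le
      exact (measure_mono hsub).trans (hcon x t (hR0.trans_lt htR) htr).le
    have h1 : Filter.Tendsto (fun k : ℕ => R + (r₀/4)/(k+1)) atTop (nhds R) := by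
      have h2 : Filter.Tendsto (fun k : ℕ => (r₀/4) * (1/(k+1))) atTop (nhds ((r₀/4) * 0)) :=
        tendsto_one_div_add_atTop_nhds_zero_nat.const_mul _
      simpa [div_eq_mul_inv, one_div] using tendsto_const_nhds.add h2
    have h2 : ContinuousAt (fun u : ℝ => ENNReal.ofReal (u ^ d)) R :=
      ENNReal.continuous_ofReal.continuousAt.comp (Real.continuousAt_rpow_const _ _ (Or.inr hd.le))
    have hlim := (h2.tendsto.comp h1 : Filter.Tendsto _ atTop _)
    have hfin : ν s ≤ ENNReal.ofReal (R ^ d) := ge_of_tendsto hlim (Filter.Eventually.of_forall key)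
    calc ν s ≤ ENNReal.ofReal (R ^ d) := hfin
      _ = ENNReal.ofReal R ^ d := (ENNReal.ofReal_rpow_of_nonneg hR0 hd.le).symm
      _ = EMetric.diam s ^ d := by rw [hR, Metric.diam]; exact congrArg (· ^ d) (ENNReal.ofReal_toReal hsfin)
  have hH : μH[d] (measSupport ν) = 0 := by
    have hh := hausdorffMeasure_of_dimH_lt (s := measSupport ν) (d := d.toNNReal) (by exact hdim)
    rwa [Real.coe_toNNReal d hd.le] at hh
  have h1 : ν (measSupport ν) = 0 :=
    le_antisymm ((hle _).trans (le_of_eq hH)) zero_le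
  have h2 : (1:ℝ≥0∞) ≤ 0 := by
    have hu := measure_univ (μ := ν)
    have h3 := measure_union_le (μ := ν) (measSupport ν) (measSupport ν)ᶜ
    rw [Set.union_compl_self, hu, h1, measSupport_compl_null] at h3
    simpa using h3
  simp at h2

noncomputable def shear (n : ℕ) (v : EuclideanSpace ℝ (Fin (n+1))) (hv : v (Fin.last n) = 0) :
    EuclideanSpace ℝ (Fin (n+1)) ≃ₗ[ℝ] EuclideanSpace ℝ (Fin (n+1)) where
  toFun η := η - (2 * η (Fin.last n)) • v
  invFun η := η + (2 * η (Fin.last n)) • v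
  map_add' η η' := by
    ext i
    simp only [PiLp.add_apply, PiLp.sub_apply, PiLp.smul_apply, smul_eq_mul]
    ring
  map_smul' c η := by
    ext i
    simp only [PiLp.smul_apply, PiLp.sub_apply, smul_eq_mul, RingHom.id_apply]
    ring
  left_inv η := by
    ext i
    have h1 : (η - (2 * η (Fin.last n)) • v) (Fin.last n) = η (Fin.last n) := by
      simp [PiLp.sub_apply, PiLp.smul_apply, hv]
    simp only [h1, PiLp.add_apply, PiLp.sub_apply, PiLp.smul_apply, smul_eq_mul]
    ring
  right_inv η := by
    ext i
    have h1 : (η + (2 * η (Fin.last n)) • v) (Fin.last n) = η (Fin.last n) := by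
      simp [PiLp.add_apply, PiLp.smul_apply, hv]
    simp only [h1, PiLp.add_apply, PiLp.sub_apply, PiLp.smul_apply, smul_eq_mul]
    ring

lemma shear_det (n : ℕ) (v : EuclideanSpace ℝ (Fin (n+1))) (hv : v (Fin.last n) = 0) :
    LinearMap.det ((shear n v hv : _ ≃ₗ[ℝ] _) : EuclideanSpace ℝ (Fin (n+1)) →ₗ[ℝ] EuclideanSpace ℝ (Fin (n+1))) = 1 := by
  set b := (EuclideanSpace.basisFun (Fin (n+1)) ℝ).toBasis with hb
  rw [← LinearMap.det_toMatrix b]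
  have hM : ∀ i j, LinearMap.toMatrix b b ((shear n v hv : _ ≃ₗ[ℝ] _) :
      EuclideanSpace ℝ (Fin (n+1)) →ₗ[ℝ] EuclideanSpace ℝ (Fin (n+1))) i j =
      (if j = i then 1 else 0) - 2 * (if j = Fin.last n then (1:ℝ) else 0) * v i := by
    intro i j
    rw [LinearMap.toMatrix_apply, hb]
    rw [OrthonormalBasis.coe_toBasis_repr_apply, OrthonormalBasis.coe_toBasis]
    rw [EuclideanSpace.basisFun_apply]
    have : ((shear n v hv) (EuclideanSpace.single j 1)) i
        = EuclideanSpace.single j 1 i - (2 * EuclideanSpace.single j 1 (Fin.last n)) * v i := rfl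
    rw [EuclideanSpace.basisFun_repr]
    simp only [LinearEquiv.coe_coe]
    rw [this]
    simp [EuclideanSpace.single_apply, eq_comm]
  rw [Matrix.det_of_upperTriangular]
  · rw [Finset.prod_eq_one]
    intro i _
    rw [hM]
    rcases eq_or_ne i (Fin.last n) with rfl | hi
    · simp [hv]
    · simp [Ne.symm hi, hi]
  · intro i j hij
    rw [hM]
    have h1 : j ≠ i := ne_of_lt hij
    have h2 : j ≠ Fin.last n := by
      intro h; subst h; exact absurd (Fin.le_last i) (not_le.2 hij)
    simp [h1, h2]

section phase
variable {n : ℕ} {a x η : EuclideanSpace ℝ (Fin (n+1))}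

lemma coord_abs_le_dist (x a : EuclideanSpace ℝ (Fin (n+1))) (j : Fin (n+1)) :
    |x j - a j| ≤ dist x a := by
  have h := Finset.single_le_sum (f := fun i => dist (x i) (a i) ^ 2)
    (fun i _ => sq_nonneg _) (Finset.mem_univ j)
  calc |x j - a j| = Real.sqrt (dist (x j) (a j) ^ 2) := by
        rw [Real.sqrt_sq dist_nonneg, Real.dist_eq]
    _ ≤ Real.sqrt (∑ i, dist (x i) (a i) ^ 2) := Real.sqrt_le_sqrt h
    _ = dist x a := (EuclideanSpace.dist_eq x a).symm

lemma sum_sq_le_dist_sq (x a : EuclideanSpace ℝ (Fin (n+1))) :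
    ∑ i : Fin n, (x (Fin.castSucc i) - a (Fin.castSucc i)) ^ 2 ≤ dist x a ^ 2 := by
  have h : dist x a ^ 2 = ∑ j, dist (x j) (a j) ^ 2 := by
    rw [EuclideanSpace.dist_eq, Real.sq_sqrt (Finset.sum_nonneg fun i _ => sq_nonneg _)]
  rw [h, Fin.sum_univ_castSucc]
  have h2 : ∀ i : Fin n, (x (Fin.castSucc i) - a (Fin.castSucc i)) ^ 2
      = dist (x (Fin.castSucc i)) (a (Fin.castSucc i)) ^ 2 := by
    intro i; rw [Real.dist_eq, sq_abs]
  rw [Finset.sum_congr rfl fun i _ => h2 i]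
  exact le_add_of_nonneg_right (sq_nonneg _)

lemma phase_eq (hv : ∀ i : Fin n, (fun j => if j = Fin.last n then (0:ℝ) else a j) (Fin.castSucc i) = a (Fin.castSucc i))
    (hxP : x (Fin.last n) = ∑ i : Fin n, (x (Fin.castSucc i)) ^ 2)
    (haP : a (Fin.last n) = ∑ i : Fin n, (a (Fin.castSucc i)) ^ 2)
    (hvl : (fun j => if j = Fin.last n then (0:ℝ) else a j) (Fin.last n) = 0) :
    (inner ℝ (x - a) ((shear n (WithLp.toLp 2 (fun j => if j = Fin.last n then (0:ℝ) else a j)) hvl) η) : ℝ)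
      = ∑ i : Fin n, (x (Fin.castSucc i) - a (Fin.castSucc i)) * η (Fin.castSucc i)
        + η (Fin.last n) * ∑ i : Fin n, (x (Fin.castSucc i) - a (Fin.castSucc i)) ^ 2 := by
  set v : EuclideanSpace ℝ (Fin (n+1)) := WithLp.toLp 2 (fun j => if j = Fin.last n then (0:ℝ) else a j) with hvdef
  set ξ := (shear n v hvl) η with hξ
  have hξc : ∀ i : Fin n, ξ (Fin.castSucc i)
      = η (Fin.castSucc i) - 2 * η (Fin.last n) * a (Fin.castSucc i) := by
    intro i
    show η (Fin.castSucc i) - (2 * η (Fin.last n)) * v (Fin.castSucc i) = _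
    rw [hvdef]
    simp [(Fin.castSucc_lt_last i).ne]
  have hξl : ξ (Fin.last n) = η (Fin.last n) := by
    show η (Fin.last n) - (2 * η (Fin.last n)) * v (Fin.last n) = _
    rw [show v (Fin.last n) = 0 from hvl]; ring
  rw [PiLp.inner_apply]
  simp only [RCLike.inner_apply, starRingEnd_apply, star_trivial, PiLp.sub_apply]
  rw [Fin.sum_univ_castSucc]
  simp only [hξc, hξl, hxP, haP]
  rw [← Finset.sum_sub_distrib, Finset.mul_sum, Finset.mul_sum, ← Finset.sum_add_distrib,
    ← Finset.sum_add_distrib]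
  exact Finset.sum_congr rfl fun i _ => by ring

end phase

section knapp
variable {n : ℕ}

lemma phase_bound (hn : 1 ≤ n) {a x η : EuclideanSpace ℝ (Fin (n+1))}
    (haP : a (Fin.last n) = ∑ i : Fin n, (a (Fin.castSucc i)) ^ 2)
    (hxP : x (Fin.last n) = ∑ i : Fin n, (x (Fin.castSucc i)) ^ 2)
    {s : ℝ} (hs : 0 < s) (hdist : dist x a ≤ s)
    (hvl : (fun j => if j = Fin.last n then (0:ℝ) else a j) (Fin.last n) = 0)
    (hη : ∀ j, η j ∈ Set.Icc (0:ℝ) (if j = Fin.last n then (1/16)/s^2 else (1/16)/(n*s))) :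
    |(inner ℝ (x - a) ((shear n (WithLp.toLp 2 (fun j => if j = Fin.last n then (0:ℝ) else a j)) hvl) η) : ℝ)| ≤ 1/8 := by
  rw [phase_eq (fun i => by simp [(Fin.castSucc_lt_last i).ne]) hxP haP hvl]
  have hn0 : (0:ℝ) < n := by exact_mod_cast hn
  have hA : |∑ i : Fin n, (x (Fin.castSucc i) - a (Fin.castSucc i)) * η (Fin.castSucc i)| ≤ 1/16 := by
    refine (Finset.abs_sum_le_sum_abs _ _).trans ?_
    have hterm : ∀ i : Fin n, |(x (Fin.castSucc i) - a (Fin.castSucc i)) * η (Fin.castSucc i)|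
        ≤ s * ((1/16)/(n*s)) := by
      intro i
      rw [abs_mul]
      have h1 : |x (Fin.castSucc i) - a (Fin.castSucc i)| ≤ s :=
        (coord_abs_le_dist x a _).trans hdist
      have h2 := hη (Fin.castSucc i)
      rw [if_neg (Fin.castSucc_lt_last i).ne] at h2
      have h3 : |η (Fin.castSucc i)| ≤ (1/16)/(n*s) := by
        rw [abs_of_nonneg h2.1]; exact h2.2
      exact mul_le_mul h1 h3 (abs_nonneg _) hs.le
    refine (Finset.sum_le_sum fun i _ => hterm i).trans ?_
    rw [Finset.sum_const, Finset.card_univ, Fintype.card_fin, nsmul_eq_mul]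
    apply le_of_eq
    field_simp
  have hB : |η (Fin.last n) * ∑ i : Fin n, (x (Fin.castSucc i) - a (Fin.castSucc i)) ^ 2| ≤ 1/16 := by
    have h2 := hη (Fin.last n)
    rw [if_pos rfl] at h2
    have hsum0 : (0:ℝ) ≤ ∑ i : Fin n, (x (Fin.castSucc i) - a (Fin.castSucc i)) ^ 2 :=
      Finset.sum_nonneg fun i _ => sq_nonneg _
    rw [abs_of_nonneg (mul_nonneg h2.1 hsum0)]
    have hsum : ∑ i : Fin n, (x (Fin.castSucc i) - a (Fin.castSucc i)) ^ 2 ≤ s^2 :=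
      (sum_sq_le_dist_sq x a).trans (by nlinarith [dist_nonneg (x := x) (y := a)])
    calc η (Fin.last n) * ∑ i : Fin n, (x (Fin.castSucc i) - a (Fin.castSucc i)) ^ 2
        ≤ ((1/16)/s^2) * s^2 := mul_le_mul h2.2 hsum hsum0 (by positivity)
      _ = 1/16 := by field_simp
  calc |_ + _| ≤ _ + _ := abs_add_le _ _
    _ ≤ 1/16 + 1/16 := add_le_add hA hB
    _ = 1/8 := by norm_num
end knapp

section integral
variable {n : ℕ}

lemma knapp_pointwise (hn : 1 ≤ n) (ν : Measure (EuclideanSpace ℝ (Fin (n+1))))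
    [IsProbabilityMeasure ν]
    (hPae : ∀ᵐ x ∂ν, x (Fin.last n) = ∑ i : Fin n, (x (Fin.castSucc i)) ^ 2)
    {a : EuclideanSpace ℝ (Fin (n+1))}
    (haP : a (Fin.last n) = ∑ i : Fin n, (a (Fin.castSucc i)) ^ 2)
    {s : ℝ} (hs : 0 < s)
    (hvl : (fun j => if j = Fin.last n then (0:ℝ) else a j) (Fin.last n) = 0)
    {η : EuclideanSpace ℝ (Fin (n+1))}
    (hη : ∀ j, η j ∈ Set.Icc (0:ℝ) (if j = Fin.last n then (1/16)/s^2 else (1/16)/(n*s))) :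
    (ν (Metric.closedBall a s)).toReal / 2 ≤
      ‖∫ x, (Metric.closedBall a s).indicator (fun _ => (1:ℂ)) x *
        Complex.exp (-(2 * Real.pi * Complex.I) *
          ((inner ℝ x ((shear n (WithLp.toLp 2 (fun j => if j = Fin.last n then (0:ℝ) else a j)) hvl) η) : ℝ) : ℂ)) ∂ν‖ := by
  set ξ := (shear n (WithLp.toLp 2 (fun j => if j = Fin.last n then (0:ℝ) else a j)) hvl) η with hξ
  set B := Metric.closedBall a s with hB
  have hBmeas : MeasurableSet B := Metric.isClosed_closedBall.measurableSet
  set g : EuclideanSpace ℝ (Fin (n+1)) → ℂ :=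
    fun x => Complex.exp (-(2 * Real.pi * Complex.I) * ((inner ℝ x ξ : ℝ) : ℂ)) with hg
  have hind : (fun x => B.indicator (fun _ => (1:ℂ)) x * g x) = B.indicator g := by
    funext x
    by_cases hx : x ∈ B
    · simp [Set.indicator_of_mem hx]
    · simp [Set.indicator_of_notMem hx]
  rw [hind, integral_indicator hBmeas]
  set w : ℝ := 2 * Real.pi * (inner ℝ a ξ : ℝ) with hw
  set u : EuclideanSpace ℝ (Fin (n+1)) → ℝ := fun x => w - 2 * Real.pi * (inner ℝ x ξ : ℝ) with hu
  have hgu : ∀ x, Complex.exp ((w:ℝ) * Complex.I) * g x = Complex.exp ((u x : ℝ) * Complex.I) := by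
    intro x
    rw [hg, ← Complex.exp_add]
    congr 1
    push_cast [hu]
    ring
  have hcont : Continuous fun x : EuclideanSpace ℝ (Fin (n+1)) =>
      Complex.exp ((u x : ℝ) * Complex.I) := by
    refine Complex.continuous_exp.comp ?_
    exact ((Complex.continuous_ofReal.comp
      ((continuous_const.sub (continuous_const.mul (continuous_id.inner continuous_const)))
        : Continuous u))).mul continuous_const
  have hInt : Integrable (fun x => Complex.exp ((u x : ℝ) * Complex.I)) (ν.restrict B) := by
    refine Integrable.mono' (integrable_const 1) hcont.aestronglyMeasurable ?_
    refine Filter.Eventually.of_forall fun x => ?_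
    rw [Complex.norm_exp_ofReal_mul_I]
  have hIntc : Integrable (fun _ : EuclideanSpace ℝ (Fin (n+1)) => (1/2 : ℝ)) (ν.restrict B) :=
    integrable_const _
  have hIntcos : Integrable (fun x => Real.cos (u x)) (ν.restrict B) := by
    refine Integrable.mono' (integrable_const (1:ℝ)) (Real.continuous_cos.comp
      ((continuous_const.sub (continuous_const.mul (continuous_id.inner continuous_const)))
        : Continuous u)).aestronglyMeasurable ?_
    refine Filter.Eventually.of_forall fun x => ?_
    rw [Real.norm_eq_abs]
    exact (Real.abs_cos_le_one _).trans (by norm_num)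
  -- a.e. lower bound for cos (u x)
  have hae : ∀ᵐ x ∂(ν.restrict B), (1/2 : ℝ) ≤ Real.cos (u x) := by
    have h1 : ∀ᵐ x ∂(ν.restrict B), x ∈ B := ae_restrict_mem hBmeas
    have h2 : ∀ᵐ x ∂(ν.restrict B), x (Fin.last n) = ∑ i : Fin n, (x (Fin.castSucc i)) ^ 2 :=
      ae_restrict_of_ae hPae
    filter_upwards [h1, h2] with x hx hxP
    have hdist : dist x a ≤ s := Metric.mem_closedBall.1 hx
    have hip : |(inner ℝ (x - a) ξ : ℝ)| ≤ 1/8 := phase_bound hn haP hxP hs hdist hvl hη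
    have hux : u x = -(2 * Real.pi * (inner ℝ (x - a) ξ : ℝ)) := by
      rw [hu, inner_sub_left, hw]
      ring
    have habs : |u x| ≤ Real.pi / 4 := by
      rw [hux, abs_neg, abs_mul, abs_of_nonneg (by positivity : (0:ℝ) ≤ 2 * Real.pi)]
      calc 2 * Real.pi * |(inner ℝ (x - a) ξ : ℝ)| ≤ 2 * Real.pi * (1/8) :=
            mul_le_mul_of_nonneg_left hip (by positivity)
        _ = Real.pi / 4 := by ring
    calc (1/2 : ℝ) ≤ Real.sqrt 2 / 2 := by
          rw [div_le_div_iff₀ (by norm_num) (by norm_num)]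
          nlinarith [Real.sq_sqrt (by norm_num : (2:ℝ) ≥ 0), Real.sqrt_nonneg 2]
      _ = Real.cos (Real.pi / 4) := Real.cos_pi_div_four.symm
      _ ≤ Real.cos |u x| := Real.cos_le_cos_of_nonneg_of_le_pi (abs_nonneg _)
          (by linarith [Real.pi_pos]) habs
      _ = Real.cos (u x) := Real.cos_abs (u x)
  -- putting it together
  have key : (ν B).toReal / 2 ≤ (Complex.exp ((w:ℝ) * Complex.I) * ∫ x in B, g x ∂ν).re := by
    rw [← integral_const_mul]
    have heq : ∀ x, Complex.exp ((w:ℝ) * Complex.I) * g x = Complex.exp ((u x : ℝ) * Complex.I) := hgu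
    rw [integral_congr_ae (Filter.Eventually.of_forall heq)]
    have hre : (∫ x in B, Complex.exp ((u x : ℝ) * Complex.I) ∂ν).re
        = ∫ x in B, Real.cos (u x) ∂ν := by
      rw [show (∫ x in B, Complex.exp ((u x : ℝ) * Complex.I) ∂ν).re
          = RCLike.re (∫ x in B, Complex.exp ((u x : ℝ) * Complex.I) ∂ν) from rfl,
        ← integral_re hInt]
      refine integral_congr_ae (Filter.Eventually.of_forall fun x => ?_)
      simp [RCLike.re_to_complex, Complex.exp_ofReal_mul_I_re]
    rw [hre]
    have h3 : ∫ x in B, (1/2:ℝ) ∂ν ≤ ∫ x in B, Real.cos (u x) ∂ν :=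
      integral_mono_ae hIntc hIntcos hae
    have h4 : ∫ x in B, (1/2:ℝ) ∂ν = (ν B).toReal / 2 := by
      rw [setIntegral_const, smul_eq_mul]
      rw [Measure.real]; ring
    linarith
  calc (ν B).toReal / 2 ≤ (Complex.exp ((w:ℝ) * Complex.I) * ∫ x in B, g x ∂ν).re := key
    _ ≤ ‖Complex.exp ((w:ℝ) * Complex.I) * ∫ x in B, g x ∂ν‖ := Complex.re_le_norm _
    _ = ‖∫ x in B, g x ∂ν‖ := by
        rw [norm_mul, Complex.norm_exp_ofReal_mul_I, one_mul]
end integral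

lemma exponent_nonneg (K e : ℝ) (hK : 0 < K)
    (h : ∀ r₀ : ℝ, 0 < r₀ → ∃ r, 0 < r ∧ r < r₀ ∧ r ^ e ≤ K) : 0 ≤ e := by
  by_contra he
  push_neg at he
  have hKe : (0:ℝ) < (K+1) ^ (1/e) := Real.rpow_pos_of_pos (by linarith) _
  obtain ⟨r, hr0, hrlt, hrK⟩ := h (min 1 ((K+1) ^ (1/e))) (lt_min one_pos hKe)
  have h1 : r < (K+1) ^ (1/e) := hrlt.trans_le (min_le_right _ _)
  have h2 : ((K+1) ^ (1/e)) ^ e < r ^ e := Real.rpow_lt_rpow_of_neg hr0 h1 he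
  rw [← Real.rpow_mul (by linarith : (0:ℝ) ≤ K+1), one_div, inv_mul_cancel₀ he.ne,
    Real.rpow_one] at h2
  linarith

lemma scale_estimate (n : ℕ) (hn : 1 ≤ n)
    (ν : Measure (EuclideanSpace ℝ (Fin (n + 1)))) [IsProbabilityMeasure ν]
    (hP : ν (paraboloid n)ᶜ = 0)
    (p q Cr : ℝ) (hq : 1 ≤ q) (hp : 1 ≤ p) (hCr : 0 < Cr)
    (hrest : ∀ f : EuclideanSpace ℝ (Fin (n + 1)) → ℂ, MemLp f (ENNReal.ofReal q) ν →
      eLpNorm (fun ξ : EuclideanSpace ℝ (Fin (n + 1)) =>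
          ∫ x, f x * Complex.exp (-(2 * Real.pi * Complex.I) * ((inner ℝ x ξ : ℝ) : ℂ)) ∂ν)
        (ENNReal.ofReal p) volume ≤
      ENNReal.ofReal Cr * eLpNorm f (ENNReal.ofReal q) ν)
    {a : EuclideanSpace ℝ (Fin (n+1))} (haP : a ∈ paraboloid n) {s : ℝ} (hs : 0 < s) :
    (ν (Metric.closedBall a s)).toReal / 2 * (((1/16)/(n*s))^n * ((1/16)/s^2)) ^ (1/p)
      ≤ Cr * (ν (Metric.closedBall a s)).toReal ^ (1/q) := by
  have hp0 : (0:ℝ) < p := lt_of_lt_of_le one_pos hp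
  have hq0 : (0:ℝ) < q := lt_of_lt_of_le one_pos hq
  have hn0 : (0:ℝ) < n := by exact_mod_cast hn
  set B := Metric.closedBall a s with hBdef
  have hBmeas : MeasurableSet B := Metric.isClosed_closedBall.measurableSet
  set m := (ν B).toReal with hm
  have hνB : ν B ≠ ⊤ := (measure_lt_top ν B).ne
  have hm0 : 0 ≤ m := ENNReal.toReal_nonneg
  -- the test function
  set f : EuclideanSpace ℝ (Fin (n + 1)) → ℂ := B.indicator (fun _ => (1:ℂ)) with hf
  have hfmem : MemLp f (ENNReal.ofReal q) ν := MemLp.indicator hBmeas (memLp_const 1)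
  have hq0' : ENNReal.ofReal q ≠ 0 := by
    simp [ENNReal.ofReal_eq_zero]; linarith
  have hqtop : ENNReal.ofReal q ≠ ⊤ := ENNReal.ofReal_ne_top
  have hRHS : eLpNorm f (ENNReal.ofReal q) ν = (ν B) ^ (1/q) := by
    rw [hf, eLpNorm_indicator_const hBmeas hq0' hqtop]
    simp [ENNReal.toReal_ofReal hq0.le]
  -- the box and its image
  have hvl : (fun j => if j = Fin.last n then (0:ℝ) else a j) (Fin.last n) = 0 := by simp
  set bb : Fin (n+1) → ℝ := fun j => if j = Fin.last n then (1/16)/s^2 else (1/16)/(n*s) with hbb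
  set Q : Set (EuclideanSpace ℝ (Fin (n+1))) := WithLp.ofLp ⁻¹' Set.univ.pi fun j => Set.Icc (0:ℝ) (bb j) with hQdef
  have hQmeas : MeasurableSet Q :=
    (MeasurableEquiv.toLp 2 (Fin (n+1) → ℝ)).symm.measurable
      (MeasurableSet.univ_pi fun j => measurableSet_Icc)
  set L : EuclideanSpace ℝ (Fin (n+1)) →ₗ[ℝ] EuclideanSpace ℝ (Fin (n+1)) :=
    (shear n (WithLp.toLp 2 (fun j => if j = Fin.last n then (0:ℝ) else a j)) hvl).toLinearMap with hL
  set T : Set (EuclideanSpace ℝ (Fin (n+1))) := L '' Q with hT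
  have hTpre : T = (shear n (WithLp.toLp 2 (fun j => if j = Fin.last n then (0:ℝ) else a j)) hvl).symm ⁻¹' Q := by
    ext ξ
    constructor
    · rintro ⟨η, hη, rfl⟩
      simpa [hL, LinearEquiv.symm_apply_apply] using hη
    · intro h
      exact ⟨_, h, by simp [hL, LinearEquiv.apply_symm_apply]⟩
  have hTmeas : MeasurableSet T := by
    rw [hTpre]
    exact ((shear n _ hvl).symm.toLinearMap.continuous_of_finiteDimensional).measurable hQmeas
  -- volume computations
  set V : ℝ := ((1/16)/(n*s))^n * ((1/16)/s^2) with hV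
  have hV0 : 0 < V := by positivity
  have hQvol : volume Q = ENNReal.ofReal V := by
    have h1 := ((EuclideanSpace.volume_preserving_symm_measurableEquiv_toLp (Fin (n+1))).measure_preimage_equiv
      (Set.univ.pi fun j => Set.Icc (0:ℝ) (bb j)))
    refine Eq.trans (Eq.trans ?_ h1) ?_
    · rfl
    · rw [volume_pi_pi]
      simp only [Real.volume_Icc, sub_zero]
      have hbbnn : ∀ j ∈ Finset.univ, (0:ℝ) ≤ bb j := by
        intro j _
        rw [hbb]
        dsimp only
        split <;> positivity
      rw [← ENNReal.ofReal_prod_of_nonneg hbbnn]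
      congr 1
      rw [Fin.prod_univ_castSucc]
      have h2 : ∀ i : Fin n, bb (Fin.castSucc i) = (1/16)/(n*s) := fun i => by
        rw [hbb]; exact if_neg (Fin.castSucc_lt_last i).ne
      rw [Finset.prod_congr rfl (fun i _ => h2 i), Finset.prod_const, Finset.card_univ,
        Fintype.card_fin, hV, hbb]
      simp
  have hTvol : volume T = ENNReal.ofReal V := by
    rw [hT, Measure.addHaar_image_linearMap, hL, shear_det, hQvol]
    simp
  -- lower bound for the Fourier transform on T
  have hPae : ∀ᵐ x ∂ν, x (Fin.last n) = ∑ i : Fin n, (x (Fin.castSucc i)) ^ 2 := by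
    have h1 : ∀ᵐ x ∂ν, x ∈ paraboloid n := by
      rw [MeasureTheory.ae_iff]
      exact hP
    exact h1.mono fun x hx => hx.2
  have hlow : ∀ ξ ∈ T, m / 2 ≤
      ‖∫ x, f x * Complex.exp (-(2 * Real.pi * Complex.I) * ((inner ℝ x ξ : ℝ) : ℂ)) ∂ν‖ := by
    rintro ξ ⟨η, hηQ, rfl⟩
    have hη : ∀ j, η j ∈ Set.Icc (0:ℝ) (if j = Fin.last n then (1/16)/s^2 else (1/16)/(n*s)) :=
      fun j => hηQ j (Set.mem_univ j)
    exact knapp_pointwise hn ν hPae haP.2 hs hvl hη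
  -- eLpNorm lower bound
  have hp0' : ENNReal.ofReal p ≠ 0 := by
    simp [ENNReal.ofReal_eq_zero]; linarith
  have hptop : ENNReal.ofReal p ≠ ⊤ := ENNReal.ofReal_ne_top
  have hLHS : ENNReal.ofReal (m/2) * (ENNReal.ofReal V) ^ (1/p) ≤
      eLpNorm (fun ξ : EuclideanSpace ℝ (Fin (n + 1)) =>
          ∫ x, f x * Complex.exp (-(2 * Real.pi * Complex.I) * ((inner ℝ x ξ : ℝ) : ℂ)) ∂ν)
        (ENNReal.ofReal p) volume := by
    have hmono := eLpNorm_mono (p := ENNReal.ofReal p) (μ := volume)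
      (f := T.indicator (fun _ => ((m/2 : ℝ) : ℂ)))
      (g := fun ξ : EuclideanSpace ℝ (Fin (n + 1)) =>
          ∫ x, f x * Complex.exp (-(2 * Real.pi * Complex.I) * ((inner ℝ x ξ : ℝ) : ℂ)) ∂ν)
      (fun ξ => by
        by_cases hξ : ξ ∈ T
        · rw [Set.indicator_of_mem hξ]
          calc ‖((m/2 : ℝ) : ℂ)‖ = m/2 := by
                rw [Complex.norm_real, Real.norm_eq_abs, abs_of_nonneg (by linarith)]
            _ ≤ _ := hlow ξ hξ
        · rw [Set.indicator_of_notMem hξ]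
          simp)
    rw [eLpNorm_indicator_const hTmeas hp0' hptop, hTvol] at hmono
    refine le_trans (le_of_eq ?_) hmono
    rw [ENNReal.toReal_ofReal hp0.le]
    congr 1
    rw [← ofReal_norm, Complex.norm_real, Real.norm_eq_abs,
      abs_of_nonneg (by linarith)]
  -- combine
  have hcomb := le_trans hLHS ((hrest f hfmem).trans (le_of_eq (by rw [hRHS])))
  -- translate to reals
  rw [show ν B = ENNReal.ofReal m from (ENNReal.ofReal_toReal hνB).symm] at hcomb
  rw [ENNReal.ofReal_rpow_of_nonneg hV0.le (by positivity : (0:ℝ) ≤ 1/p),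
    ENNReal.ofReal_rpow_of_nonneg hm0 (by positivity : (0:ℝ) ≤ 1/q),
    ← ENNReal.ofReal_mul (by linarith : (0:ℝ) ≤ m/2),
    ← ENNReal.ofReal_mul hCr.le] at hcomb
  exact (ENNReal.ofReal_le_ofReal_iff (by positivity)).1 hcomb


theorem stmt_7 (n : ℕ) (hn : 1 ≤ n) (α : ℝ) (hα0 : 0 < α) (hα1 : α < n)
    (ν : Measure (EuclideanSpace ℝ (Fin (n + 1)))) [IsProbabilityMeasure ν]
    (hP : ν (paraboloid n)ᶜ = 0)
    (hdim : dimH (measSupport ν) = ENNReal.ofReal α)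
    (Cb : ℝ) (hCb : 0 < Cb)
    (hball : ∀ (x : EuclideanSpace ℝ (Fin (n + 1))) (r : ℝ), 0 < r →
      ν (Metric.closedBall x r) ≤ ENNReal.ofReal (Cb * r ^ α))
    (p q q' Cr : ℝ) (hq : 1 ≤ q) (hq' : 1 / q + 1 / q' = 1) (hp : 1 ≤ p) (hCr : 0 < Cr)
    (hrest : ∀ f : EuclideanSpace ℝ (Fin (n + 1)) → ℂ, MemLp f (ENNReal.ofReal q) ν →
      eLpNorm (fun ξ : EuclideanSpace ℝ (Fin (n + 1)) =>
          ∫ x, f x * Complex.exp (-(2 * Real.pi * Complex.I) * ((inner ℝ x ξ : ℝ) : ℂ)) ∂ν)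
        (ENNReal.ofReal p) volume ≤
      ENNReal.ofReal Cr * eLpNorm f (ENNReal.ofReal q) ν) :
    q' * (n + 2) / α ≤ p := by
  have hp0 : (0:ℝ) < p := lt_of_lt_of_le one_pos hp
  have hq0 : (0:ℝ) < q := lt_of_lt_of_le one_pos hq
  have hn0 : (0:ℝ) < n := by exact_mod_cast hn
  rcases eq_or_lt_of_le hq with hq1 | hq1
  · -- q = 1, so q' = 0 and the claim is trivial
    have h1 : 1/q' = 0 := by rw [← hq1] at hq'; linarith
    have hq'0 : q' = 0 := by
      by_contra h
      rw [one_div, inv_eq_zero] at h1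
      exact h h1
    rw [hq'0, zero_mul, zero_div]
    linarith
  · -- q > 1
    have hq'inv : 1/q' = 1 - 1/q := by linarith
    have hq'invpos : 0 < 1/q' := by
      rw [hq'inv, sub_pos, div_lt_one hq0]
      exact hq1
    have hq'pos : 0 < q' := one_div_pos.1 hq'invpos
    set Cn : ℝ := (1/(32*(n:ℝ)))^n * (1/64) with hCn
    have hCn0 : 0 < Cn := by positivity
    set K : ℝ := 2*Cr / Cn ^ ((1:ℝ)/p) with hKdef
    have hCnp : 0 < Cn ^ ((1:ℝ)/p) := Real.rpow_pos_of_pos hCn0 _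
    have hK0 : 0 < K := by positivity
    have key : ∀ d : ℝ, α < d → ((n:ℝ)+2)/p ≤ d/q' := by
      intro d hd
      have hd0 : (0:ℝ) < d := hα0.trans hd
      have hscales : ∀ r₀ : ℝ, 0 < r₀ →
          ∃ r, 0 < r ∧ r < r₀ ∧ r ^ (d/q' - ((n:ℝ)+2)/p) ≤ K := by
        intro r₀ hr₀
        have hdimlt : dimH (measSupport ν) < ENNReal.ofReal d := by
          rw [hdim]
          exact (ENNReal.ofReal_lt_ofReal_iff hd0).2 hd
        obtain ⟨x₀, r, hr0, hrr₀, hfr⟩ := frostman_claim ν d hd0 hdimlt r₀ hr₀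
        refine ⟨r, hr0, hrr₀, ?_⟩
        have hrd0 : (0:ℝ) < r ^ d := Real.rpow_pos_of_pos hr0 d
        have hν0 : 0 < ν (Metric.closedBall x₀ r) :=
          lt_of_lt_of_le (ENNReal.ofReal_pos.2 hrd0) hfr
        have hne : (Metric.closedBall x₀ r ∩ paraboloid n).Nonempty := by
          by_contra hemp
          rw [Set.not_nonempty_iff_eq_empty] at hemp
          have hsub : Metric.closedBall x₀ r ⊆ (paraboloid n)ᶜ := fun y hy hyP =>
            Set.eq_empty_iff_forall_notMem.1 hemp y ⟨hy, hyP⟩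
          have h0 := (measure_mono hsub).trans_eq hP
          exact hν0.ne' (le_antisymm h0 zero_le)
        obtain ⟨a, haB, haP⟩ := hne
        set s : ℝ := 2*r with hsdef
        have hs0 : 0 < s := by positivity
        have hsub2 : Metric.closedBall x₀ r ⊆ Metric.closedBall a s := by
          intro y hy
          have h1 : dist y x₀ ≤ r := Metric.mem_closedBall.1 hy
          have h2 : dist a x₀ ≤ r := Metric.mem_closedBall.1 haB
          rw [Metric.mem_closedBall]
          calc dist y a ≤ dist y x₀ + dist x₀ a := dist_triangle _ _ _
            _ = dist y x₀ + dist a x₀ := by rw [dist_comm x₀ a]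
            _ ≤ s := by rw [hsdef]; linarith
        set m : ℝ := (ν (Metric.closedBall a s)).toReal with hmdef
        have hνB : ν (Metric.closedBall a s) ≠ ⊤ := (measure_lt_top _ _).ne
        have hmge : r ^ d ≤ m := by
          have h3 : ENNReal.ofReal (r^d) ≤ ν (Metric.closedBall a s) :=
            hfr.trans (measure_mono hsub2)
          calc r^d = (ENNReal.ofReal (r^d)).toReal := (ENNReal.toReal_ofReal hrd0.le).symm
            _ ≤ m := ENNReal.toReal_mono hνB h3
        have hm0 : 0 < m := hrd0.trans_le hmge
        have hscale := scale_estimate n hn ν hP p q Cr hq hp hCr hrest haP hs0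
        set V : ℝ := ((1:ℝ)/16/(n*s))^n * ((1:ℝ)/16/s^2) with hVdef
        have hV0 : 0 < V := by positivity
        have hmq : 0 < m ^ ((1:ℝ)/q) := Real.rpow_pos_of_pos hm0 _
        have hA : m ^ (1/q') * V ^ ((1:ℝ)/p) ≤ 2*Cr := by
          rw [← mul_le_mul_iff_left₀ hmq]
          have e1 : m ^ (1/q') * m ^ ((1:ℝ)/q) = m := by
            rw [← Real.rpow_add hm0, show 1/q' + 1/q = 1 by linarith, Real.rpow_one]
          calc m ^ (1/q') * V^((1:ℝ)/p) * m^((1:ℝ)/q)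
              = (m ^ (1/q') * m^((1:ℝ)/q)) * V^((1:ℝ)/p) := by ring
            _ = m * V^((1:ℝ)/p) := by rw [e1]
            _ ≤ 2*Cr * m^((1:ℝ)/q) := by nlinarith [hscale]
        have hVeq : V = Cn * r ^ (-(((n:ℝ)+2))) := by
          have h5 : (1:ℝ)/16/((n:ℝ)*s) = (1/(32*(n:ℝ))) * r⁻¹ := by
            rw [hsdef]; field_simp; ring
          have h6 : (1:ℝ)/16/s^2 = (1/64) * (r^2)⁻¹ := by
            rw [hsdef]; field_simp; ring
          have h7 : r ^ (-(((n:ℝ)+2))) = ((r ^ ((n:ℕ)+2) : ℝ))⁻¹ := by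
            rw [show -((n:ℝ)+2) = -(((n+2:ℕ)):ℝ) by push_cast; ring,
              Real.rpow_neg hr0.le, Real.rpow_natCast]
          rw [hVdef, h5, h6, mul_pow, h7, hCn]
          rw [inv_pow, pow_add]
          field_simp
        have h8 : r ^ (d/q') ≤ m ^ (1/q') := by
          calc r ^ (d/q') = (r^d)^(1/q') := by
                rw [← Real.rpow_mul hr0.le]
                congr 1
                field_simp
            _ ≤ m^(1/q') := Real.rpow_le_rpow hrd0.le hmge hq'invpos.le
        have h9 : V^((1:ℝ)/p) = Cn^((1:ℝ)/p) * r^(-(((n:ℝ)+2))/p) := by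
          rw [hVeq, Real.mul_rpow hCn0.le (Real.rpow_nonneg hr0.le _),
            ← Real.rpow_mul hr0.le]
          congr 1
          field_simp
        have hC : r ^ (d/q') * (Cn^((1:ℝ)/p) * r^(-(((n:ℝ)+2))/p)) ≤ 2*Cr := by
          calc r ^ (d/q') * (Cn^((1:ℝ)/p) * r^(-(((n:ℝ)+2))/p))
              = r ^ (d/q') * V^((1:ℝ)/p) := by rw [h9]
            _ ≤ m^(1/q') * V^((1:ℝ)/p) :=
                mul_le_mul_of_nonneg_right h8 (Real.rpow_nonneg hV0.le _)
            _ ≤ 2*Cr := hA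
        have h10 : r ^ (d/q' - ((n:ℝ)+2)/p) = r^(d/q') * r^(-(((n:ℝ)+2))/p) := by
          rw [← Real.rpow_add hr0]
          congr 1
          ring
        rw [hKdef, le_div_iff₀ hCnp]
        calc r ^ (d/q' - ((n:ℝ)+2)/p) * Cn ^ ((1:ℝ)/p)
            = r ^ (d/q') * (Cn^((1:ℝ)/p) * r^(-(((n:ℝ)+2))/p)) := by rw [h10]; ring
          _ ≤ 2*Cr := hC
      have h11 := exponent_nonneg K _ hK0 hscales
      linarith
    by_cases hcase : α < q' * ((n:ℝ)+2) / p
    · exfalso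
      set d : ℝ := (α + q' * ((n:ℝ)+2)/p)/2 with hd
      have hαd : α < d := by rw [hd]; linarith
      have h1 := key d hαd
      have h2 : q' * ((n:ℝ)+2)/p ≤ d := by
        have h3 : ((n:ℝ)+2)/p * q' ≤ d := (le_div_iff₀ hq'pos).1 h1
        calc q' * ((n:ℝ)+2)/p = ((n:ℝ)+2)/p * q' := by ring
          _ ≤ d := h3
      rw [hd] at h2
      linarith
    · push_neg at hcase
      rw [div_le_iff₀ hα0]
      have h4 := (div_le_iff₀ hp0).1 hcase
      nlinarith
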